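/- arXiv:2409.19344 — 2 statements merged into one kernel-verified Lean document; each statement's English description precedes it below -/
import Mathlib

section
/- Fix integers r ≥ 2, t ≥ 1, and for integers m ≥ k ≥ 0 let 𝓖(m,k) be the family of all k-element subsets F of [m] such that there exists an integer j ≥ 0 with |F ∩ [t + r·j]| ≥ t + (r−1)·j. Then for all n ≥ k, |𝓖(n+1,k)| / C(n+1,k) ≤ |𝓖(n,k)| / C(n,k). -/
/-- `hitFamily m k r t` is the family of all `k`-element subsets `F` of `[m]` such that
there exists `j ≥ 0` with `|F ∩ [t + r·j]| ≥ t + (r−1)·j`; in lattice-path terms,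
it corresponds to the lattice paths from `(0,0)` to `(m−k,k)` hitting `y = (r−1)x + t`. -/
noncomputable def hitFamily (m k r t : ℕ) : Finset (Finset ℕ) := by
  classical
  exact (Finset.powersetCard k (Finset.Icc 1 m)).filter
    (fun F => ∃ j : ℕ, t + (r - 1) * j ≤ (F ∩ Finset.Icc 1 (t + r * j)).card)

open Finset

/-- Delete the "gap" at `x`: keep elements below `x`, shift elements above `x` down by one. -/
def delMap (x : ℕ) : ℕ → ℕ := fun a => if a < x then a else a - 1

lemma delMap_injOn {F : Finset ℕ} {x : ℕ} (hx : x ∉ F) :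
    Set.InjOn (delMap x) F := by
  intro a ha b hb hab
  have hax : a ≠ x := fun h => hx (h ▸ ha)
  have hbx : b ≠ x := fun h => hx (h ▸ hb)
  unfold delMap at hab
  split_ifs at hab <;> omega

lemma mem_hitFamily {m k r t : ℕ} {F : Finset ℕ} :
    F ∈ hitFamily m k r t ↔ (F ⊆ Icc 1 m ∧ F.card = k) ∧
      ∃ j : ℕ, t + (r - 1) * j ≤ (F ∩ Icc 1 (t + r * j)).card := by
  unfold hitFamily
  simp [Finset.mem_filter, Finset.mem_powersetCard]

lemma card_inter_le_del {F : Finset ℕ} {x s : ℕ} (hx : x ∉ F) (hx1 : 1 ≤ x) :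
    (F ∩ Icc 1 s).card ≤ (F.image (delMap x) ∩ Icc 1 s).card := by
  apply Finset.card_le_card_of_injOn (delMap x)
  · intro a ha
    simp only [mem_coe, mem_inter, mem_Icc] at ha ⊢
    obtain ⟨haF, h1, h2⟩ := ha
    have hax : a ≠ x := fun h => hx (h ▸ haF)
    refine ⟨mem_image_of_mem _ haF, ?_⟩
    unfold delMap
    split_ifs <;> omega
  · exact (delMap_injOn hx).mono (fun a ha => (mem_inter.1 ha).1)

lemma del_image_mem_hitFamily {n k r t : ℕ} {F : Finset ℕ} {x : ℕ}
    (hF : F ∈ hitFamily (n + 1) k r t) (hx : x ∈ Icc 1 (n + 1)) (hxF : x ∉ F) :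
    F.image (delMap x) ∈ hitFamily n k r t := by
  obtain ⟨⟨hsub, hcard⟩, j, hj⟩ := mem_hitFamily.1 hF
  have hx' := mem_Icc.1 hx
  refine mem_hitFamily.2 ⟨⟨?_, ?_⟩, j, le_trans hj (card_inter_le_del hxF hx'.1)⟩
  · intro b hb
    obtain ⟨a, ha, rfl⟩ := mem_image.1 hb
    have h1 := mem_Icc.1 (hsub ha)
    have hax : a ≠ x := fun h => hxF (h ▸ ha)
    simp only [mem_Icc, delMap]
    split_ifs <;> omega
  · rw [Finset.card_image_of_injOn (delMap_injOn hxF), hcard]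

lemma del_left_inv {F : Finset ℕ} {x : ℕ} (hx : x ∉ F) :
    (F.image (delMap x)).image (fun b => if b < x then b else b + 1) = F := by
  rw [Finset.image_image]
  have h : ∀ a ∈ F, ((fun b => if b < x then b else b + 1) ∘ delMap x) a = a := by
    intro a ha
    have hax : a ≠ x := fun h => hx (h ▸ ha)
    simp only [Function.comp, delMap]
    split_ifs <;> omega
  calc F.image _ = F.image id := Finset.image_congr h
    _ = F := Finset.image_id

lemma key_count (r t n k : ℕ) (hk : k ≤ n) :
    (hitFamily (n + 1) k r t).card * (n + 1 - k) ≤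
      (hitFamily n k r t).card * (n + 1) := by
  classical
  have hS : ((hitFamily (n + 1) k r t).sigma (fun F => Icc 1 (n + 1) \ F)).card
      = (hitFamily (n + 1) k r t).card * (n + 1 - k) := by
    rw [Finset.card_sigma]
    rw [Finset.sum_congr rfl (fun F hF => ?_), Finset.sum_const, smul_eq_mul]
    obtain ⟨hsub, hcard⟩ := (mem_hitFamily.1 hF).1
    rw [Finset.card_sdiff_of_subset hsub, Nat.card_Icc, hcard]
    omega
  have hT : ((hitFamily n k r t) ×ˢ Icc 1 (n + 1)).card
      = (hitFamily n k r t).card * (n + 1) := by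
    rw [Finset.card_product, Nat.card_Icc]
    norm_num
  rw [← hS, ← hT]
  apply Finset.card_le_card_of_injOn (fun p => (p.1.image (delMap p.2), p.2))
  · rintro ⟨F, x⟩ hp
    simp only [Finset.mem_coe, Finset.mem_sigma, Finset.mem_sdiff] at hp
    obtain ⟨hF, hx, hxF⟩ := hp
    exact Finset.mem_product.2 ⟨del_image_mem_hitFamily hF hx hxF, hx⟩
  · rintro ⟨F, x⟩ hp ⟨F', x'⟩ hp' h
    simp only [Finset.coe_sigma, Set.mem_sigma_iff, Finset.mem_coe,
      Finset.mem_sdiff] at hp hp'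
    obtain ⟨hF, hx, hxF⟩ := hp
    obtain ⟨hF', hx', hxF'⟩ := hp'
    simp only [Prod.mk.injEq] at h
    obtain ⟨himg, rfl⟩ := h
    have : F = F' := by
      rw [← del_left_inv hxF, ← del_left_inv hxF', himg]
    subst this
    rfl

theorem hitFamily_ratio_anti_in_ground
    (r t : ℕ) (hr : 2 ≤ r) (ht : 1 ≤ t) :
    ∀ n k : ℕ, k ≤ n →
      ((hitFamily (n + 1) k r t).card : ℝ) / (Nat.choose (n + 1) k) ≤
        ((hitFamily n k r t).card : ℝ) / (Nat.choose n k) := by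
  intro n k hkn
  have hA : 0 < (n + 1).choose k := Nat.choose_pos (by omega)
  have hB : 0 < n.choose k := Nat.choose_pos hkn
  rw [div_le_div_iff₀ (by exact_mod_cast hA) (by exact_mod_cast hB)]
  have hnat : (hitFamily (n + 1) k r t).card * n.choose k ≤
      (hitFamily n k r t).card * (n + 1).choose k := by
    have hkey := key_count r t n k hkn
    have hid : n.choose k * (n + 1) = (n + 1).choose k * (n + 1 - k) :=
      Nat.choose_mul_succ_eq n k
    have hpos : 0 < n + 1 - k := by omega
    apply Nat.le_of_mul_le_mul_right _ hpos
    calc (hitFamily (n + 1) k r t).card * n.choose k * (n + 1 - k)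
        = (hitFamily (n + 1) k r t).card * (n + 1 - k) * n.choose k := by ring
      _ ≤ (hitFamily n k r t).card * (n + 1) * n.choose k :=
          Nat.mul_le_mul_right _ hkey
      _ = (hitFamily n k r t).card * (n.choose k * (n + 1)) := by ring
      _ = (hitFamily n k r t).card * (n + 1).choose k * (n + 1 - k) := by
          rw [hid]; ring
  exact_mod_cast hnat
end

section
/- Fix integers r ≥ 3, t ≥ 2, and for integers m ≥ k ≥ 0 let 𝓖(m,k) be the family of all k-element subsets F of [m] such that there exists an integer j ≥ 0 with |F ∩ [t + r·j]| ≥ t + (r−1)·j. Then for every k ≥ 1, |𝓖(2k,k)| / C(2k,k) ≤ |𝓖(2k+2,k+1)| / C(2k+2,k+1). -/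
/-- the hitting condition at index `j` -/
def hcond (r t j : ℕ) (F : Finset ℕ) : Prop :=
  t + (r - 1) * j ≤ (F ∩ Finset.Icc 1 (t + r * j)).card

instance (r t j : ℕ) (F : Finset ℕ) : Decidable (hcond r t j F) :=
  inferInstanceAs (Decidable (_ ≤ _))

/-- sets whose first hitting index is `j` -/
def Sset (r t m k j : ℕ) : Finset (Finset ℕ) :=
  (Finset.powersetCard k (Finset.Icc 1 m)).filter
    (fun F => hcond r t j F ∧ ∀ i < j, ¬ hcond r t i F)

/-- first-hit prefix patterns at index `j` -/
def Pset (r t j : ℕ) : Finset (Finset ℕ) :=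
  (Finset.powersetCard (t + (r-1)*j) (Finset.Icc 1 (t + r*j))).filter
    (fun G => ∀ i < j, ¬ hcond r t i G)

lemma hcond_inter (r t i j : ℕ) (hij : i ≤ j) (F : Finset ℕ) :
    hcond r t i (F ∩ Finset.Icc 1 (t + r*j)) ↔ hcond r t i F := by
  unfold hcond
  have h1 : t + r*i ≤ t + r*j := by
    have := Nat.mul_le_mul_left r hij; omega
  have hI : Finset.Icc 1 (t+r*j) ∩ Finset.Icc 1 (t+r*i) = Finset.Icc 1 (t+r*i) := by
    ext x; simp only [Finset.mem_inter, Finset.mem_Icc]; omega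
  rw [Finset.inter_assoc, hI]

lemma card_inter_eq (r t j : ℕ) (hr : 3 ≤ r) (F : Finset ℕ)
    (hj : hcond r t j F) (hmin : ∀ i < j, ¬ hcond r t i F) :
    (F ∩ Finset.Icc 1 (t + r*j)).card = t + (r-1)*j := by
  refine le_antisymm ?_ hj
  by_contra hlt
  push_neg at hlt
  cases j with
  | zero =>
      have hle : (F ∩ Finset.Icc 1 (t + r*0)).card ≤ t := by
        calc (F ∩ Finset.Icc 1 (t + r*0)).card
            ≤ (Finset.Icc 1 (t+r*0)).card := Finset.card_le_card Finset.inter_subset_right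
          _ = t := by rw [Nat.card_Icc, Nat.mul_zero]; omega
      rw [Nat.mul_zero] at hlt
      omega
  | succ i =>
      refine hmin i (Nat.lt_succ_self i) ?_
      unfold hcond
      have hsub : F ∩ Finset.Icc 1 (t + r*(i+1)) ⊆
          (F ∩ Finset.Icc 1 (t + r*i)) ∪ Finset.Icc (t+r*i+1) (t+r*(i+1)) := by
        intro x hx
        simp only [Finset.mem_inter, Finset.mem_Icc, Finset.mem_union] at hx ⊢
        rcases le_or_gt x (t+r*i) with h|h
        · exact Or.inl ⟨hx.1, hx.2.1, h⟩
        · exact Or.inr ⟨h, hx.2.2⟩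
      have hIcc : (Finset.Icc (t+r*i+1) (t+r*(i+1))).card = r := by
        rw [Nat.card_Icc]
        have : r*(i+1) = r*i + r := by ring
        omega
      have hcard : (F ∩ Finset.Icc 1 (t + r*(i+1))).card ≤
          (F ∩ Finset.Icc 1 (t + r*i)).card + r := by
        calc (F ∩ Finset.Icc 1 (t + r*(i+1))).card
            ≤ ((F ∩ Finset.Icc 1 (t + r*i)) ∪ Finset.Icc (t+r*i+1) (t+r*(i+1))).card :=
              Finset.card_le_card hsub
          _ ≤ (F ∩ Finset.Icc 1 (t + r*i)).card
                + (Finset.Icc (t+r*i+1) (t+r*(i+1))).card := Finset.card_union_le _ _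
          _ = (F ∩ Finset.Icc 1 (t + r*i)).card + r := by rw [hIcc]
      have hmA : (r-1)*(i+1) = (r-1)*i + (r-1) := by ring
      omega

lemma card_Sset (r t m k j : ℕ) (hr : 3 ≤ r)
    (hA : t + (r-1)*j ≤ k) (hm : t + r*j ≤ m) :
    (Sset r t m k j).card =
      (Pset r t j).card * Nat.choose (m - (t + r*j)) (k - (t + (r-1)*j)) := by
  classical
  have hQcard : (Finset.powersetCard (k - (t+(r-1)*j)) (Finset.Icc (t+r*j+1) m)).card
      = Nat.choose (m - (t + r*j)) (k - (t + (r-1)*j)) := by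
    rw [Finset.card_powersetCard, Nat.card_Icc]
    congr 1
    omega
  rw [← hQcard, ← Finset.card_product]
  apply Finset.card_bij'
    (fun F _ => (F ∩ Finset.Icc 1 (t+r*j), F \ Finset.Icc 1 (t+r*j)))
    (fun p _ => p.1 ∪ p.2)
  · -- forward membership
    intro F hF
    simp only [Sset, Finset.mem_filter, Finset.mem_powersetCard] at hF
    obtain ⟨⟨hFsub, hFcard⟩, hcj, hminF⟩ := hF
    have hGcard := card_inter_eq r t j hr F hcj hminF
    rw [Finset.mem_product]
    constructor
    · simp only [Pset, Finset.mem_filter, Finset.mem_powersetCard]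
      refine ⟨⟨Finset.inter_subset_right, hGcard⟩, ?_⟩
      intro i hi
      rw [hcond_inter r t i j (le_of_lt hi) F]
      exact hminF i hi
    · simp only [Finset.mem_powersetCard]
      constructor
      · intro x hx
        simp only [Finset.mem_sdiff, Finset.mem_Icc] at hx
        have hxm := hFsub hx.1
        simp only [Finset.mem_Icc] at hxm
        simp only [Finset.mem_Icc]
        omega
      · have hps := Finset.card_inter_add_card_sdiff F (Finset.Icc 1 (t+r*j))
        omega
  · -- backward membership
    intro p hp
    rw [Finset.mem_product] at hp
    obtain ⟨hG, hH⟩ := hp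
    simp only [Pset, Finset.mem_filter, Finset.mem_powersetCard] at hG
    obtain ⟨⟨hGsub, hGcard⟩, hGmin⟩ := hG
    simp only [Finset.mem_powersetCard] at hH
    obtain ⟨hHsub, hHcard⟩ := hH
    have hdis : Disjoint p.1 p.2 := by
      rw [Finset.disjoint_left]
      intro x hxG hxH
      have h1 := hGsub hxG
      have h2 := hHsub hxH
      simp only [Finset.mem_Icc] at h1 h2
      omega
    have hkey : ∀ i ≤ j, (p.1 ∪ p.2) ∩ Finset.Icc 1 (t + r*i)
        = p.1 ∩ Finset.Icc 1 (t + r*i) := by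
      intro i hij
      have hsle : t + r*i ≤ t + r*j := by
        have := Nat.mul_le_mul_left r hij; omega
      ext x
      simp only [Finset.mem_inter, Finset.mem_union, Finset.mem_Icc]
      constructor
      · rintro ⟨hx | hx, hx2⟩
        · exact ⟨hx, hx2⟩
        · have := hHsub hx
          simp only [Finset.mem_Icc] at this
          omega
      · rintro ⟨hx, hx2⟩; exact ⟨Or.inl hx, hx2⟩
    simp only [Sset, Finset.mem_filter, Finset.mem_powersetCard]
    refine ⟨⟨?_, ?_⟩, ?_, ?_⟩
    · intro x hx
      rcases Finset.mem_union.1 hx with h|h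
      · have := hGsub h
        simp only [Finset.mem_Icc] at this ⊢
        omega
      · have := hHsub h
        simp only [Finset.mem_Icc] at this ⊢
        omega
    · rw [Finset.card_union_of_disjoint hdis, hGcard, hHcard]
      omega
    · show t + (r-1)*j ≤ ((p.1 ∪ p.2) ∩ Finset.Icc 1 (t + r*j)).card
      rw [hkey j le_rfl, Finset.inter_eq_left.mpr hGsub, hGcard]
    · intro i hi
      have hiff : hcond r t i (p.1 ∪ p.2) ↔ hcond r t i p.1 := by
        unfold hcond
        rw [hkey i (le_of_lt hi)]
      rw [hiff]
      exact hGmin i hi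
  · -- left inverse
    intro F _
    ext x
    simp only [Finset.mem_union, Finset.mem_inter, Finset.mem_sdiff]
    tauto
  · -- right inverse
    intro p hp
    rw [Finset.mem_product] at hp
    obtain ⟨hG, hH⟩ := hp
    simp only [Pset, Finset.mem_filter, Finset.mem_powersetCard] at hG
    have hGsub := hG.1.1
    simp only [Finset.mem_powersetCard] at hH
    have hHsub := hH.1
    have e1 : (p.1 ∪ p.2) ∩ Finset.Icc 1 (t+r*j) = p.1 := by
      ext x
      simp only [Finset.mem_inter, Finset.mem_union, Finset.mem_Icc]
      constructor
      · rintro ⟨hx | hx, hx2⟩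
        · exact hx
        · have := hHsub hx
          simp only [Finset.mem_Icc] at this
          omega
      · intro hx
        have := hGsub hx
        simp only [Finset.mem_Icc] at this
        exact ⟨Or.inl hx, this⟩
    have e2 : (p.1 ∪ p.2) \ Finset.Icc 1 (t+r*j) = p.2 := by
      ext x
      simp only [Finset.mem_sdiff, Finset.mem_union, Finset.mem_Icc]
      constructor
      · rintro ⟨hx | hx, hx2⟩
        · have := hGsub hx
          simp only [Finset.mem_Icc] at this
          omega
        · exact hx
      · intro hx
        have := hHsub hx
        simp only [Finset.mem_Icc] at this
        exact ⟨Or.inr hx, by omega⟩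
    rw [e1, e2]

lemma keyid (n b : ℕ) :
    Nat.choose (n+2) (b+1) * ((b+1) * (n+1-b)) = Nat.choose n b * ((n+1) * (n+2)) := by
  have h1 : (n+2) * Nat.choose (n+1) b = Nat.choose (n+2) (b+1) * (b+1) :=
    Nat.add_one_mul_choose_eq (n+1) b
  have h2 : Nat.choose (n+1) (b+1) * (b+1) = Nat.choose (n+1) b * (n+1-b) :=
    Nat.choose_succ_right_eq (n+1) b
  have h3 : (n+1) * Nat.choose n b = Nat.choose (n+1) (b+1) * (b+1) :=
    Nat.add_one_mul_choose_eq n b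
  calc Nat.choose (n+2) (b+1) * ((b+1) * (n+1-b))
      = (Nat.choose (n+2) (b+1) * (b+1)) * (n+1-b) := by ring
    _ = (n+2) * Nat.choose (n+1) b * (n+1-b) := by rw [h1]
    _ = (n+2) * (Nat.choose (n+1) b * (n+1-b)) := by ring
    _ = (n+2) * (Nat.choose (n+1) (b+1) * (b+1)) := by rw [h2]
    _ = (n+2) * ((n+1) * Nat.choose n b) := by rw [← h3]
    _ = Nat.choose n b * ((n+1) * (n+2)) := by ring

lemma arith (B d a : ℕ) :
    (2*(2*B+2+d+a)+1)*(2*(2*B+2+d+a)+2) * ((a+1) * (B+d+a+3)) ≤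
    (B+d+2*a+3)*(B+d+2*a+4) * ((2*B+2+d+a+1) * (2*B+2+d+a+1)) := by
  nlinarith [sq_nonneg B, sq_nonneg d, sq_nonneg a, mul_nonneg (Nat.zero_le B) (Nat.zero_le d)]

lemma binom_step (A B k : ℕ) (h1 : 2*B+2 ≤ A) (h2 : A ≤ k) :
    Nat.choose (2*k - (A+B)) (k - A) * Nat.choose (2*k+2) (k+1) ≤
    Nat.choose (2*k+2 - (A+B)) (k+1 - A) * Nat.choose (2*k) k := by
  obtain ⟨d, rfl⟩ : ∃ d, A = 2*B+2+d := ⟨A - (2*B+2), by omega⟩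
  obtain ⟨a, rfl⟩ : ∃ a, k = 2*B+2+d+a := ⟨k - (2*B+2+d), by omega⟩
  set A := 2*B+2+d with hA
  set k := 2*B+2+d+a with hk
  have e1 : 2*k - (A+B) = B+d+2*a+2 := by omega
  have e2 : k - A = a := by omega
  have e3 : 2*k+2 - (A+B) = (B+d+2*a+2)+2 := by omega
  have e4 : k+1 - A = a+1 := by omega
  rw [e1, e2, e3, e4]
  set n := B+d+2*a+2 with hn
  set X := Nat.choose n a with hX
  set Y := Nat.choose (n+2) (a+1) with hY
  set D := Nat.choose (2*k) k with hD
  set D' := Nat.choose (2*k+2) (k+1) with hD'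
  have f1 : Y * ((a+1) * (n+1-a)) = X * ((n+1) * (n+2)) := keyid n a
  have f2 : D' * ((k+1) * (2*k+1-k)) = D * ((2*k+1) * (2*k+2)) := keyid (2*k) k
  have e5 : 2*k+1-k = k+1 := by omega
  have e6 : n+1-a = B+d+a+3 := by omega
  rw [e5] at f2
  rw [e6] at f1
  have hQ : 0 < (k+1)*(k+1)*((a+1)*(B+d+a+3)) := by positivity
  refine Nat.le_of_mul_le_mul_right ?_ hQ
  calc X * D' * ((k+1)*(k+1)*((a+1)*(B+d+a+3)))
      = X * (D' * ((k+1)*(k+1))) * ((a+1)*(B+d+a+3)) := by ring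
    _ = X * (D * ((2*k+1) * (2*k+2))) * ((a+1)*(B+d+a+3)) := by rw [f2]
    _ = (X * D) * ((2*k+1) * (2*k+2) * ((a+1)*(B+d+a+3))) := by ring
    _ ≤ (X * D) * ((n+1)*(n+2) * ((k+1)*(k+1))) := by
        refine Nat.mul_le_mul_left _ ?_
        have h := arith B d a
        calc (2*k+1) * (2*k+2) * ((a+1)*(B+d+a+3))
            = (2*(2*B+2+d+a)+1)*(2*(2*B+2+d+a)+2) * ((a+1) * (B+d+a+3)) := by rw [hk]
          _ ≤ (B+d+2*a+3)*(B+d+2*a+4) * ((2*B+2+d+a+1) * (2*B+2+d+a+1)) := h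
          _ = (n+1)*(n+2) * ((k+1)*(k+1)) := by rw [hn, hk]
    _ = (X * ((n+1)*(n+2))) * D * ((k+1)*(k+1)) := by ring
    _ = (Y * ((a+1) * (B+d+a+3))) * D * ((k+1)*(k+1)) := by rw [f1]
    _ = Y * D * ((k+1)*(k+1)*((a+1)*(B+d+a+3))) := by ring

lemma card_hitFamily (r t m k : ℕ) (hr : 3 ≤ r) :
    (hitFamily m k r t).card = ∑ j ∈ Finset.range (k+1), (Sset r t m k j).card := by
  classical
  have hU : hitFamily m k r t = (Finset.range (k+1)).biUnion (fun j => Sset r t m k j) := by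
    ext F
    simp only [hitFamily, Sset, Finset.mem_filter, Finset.mem_biUnion, Finset.mem_range]
    constructor
    · rintro ⟨hFmem, hex⟩
      have hex' : ∃ j, hcond r t j F := hex
      have hspec := Nat.find_spec hex'
      have hFk : F.card = k := (Finset.mem_powersetCard.1 hFmem).2
      refine ⟨Nat.find hex', ?_, hFmem, hspec, fun i hi => Nat.find_min hex' hi⟩
      unfold hcond at hspec
      have hcle : (F ∩ Finset.Icc 1 (t + r * Nat.find hex')).card ≤ k := by
        rw [← hFk]
        exact Finset.card_le_card Finset.inter_subset_left
      have hj2 : Nat.find hex' ≤ (r-1) * Nat.find hex' :=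
        Nat.le_mul_of_pos_left _ (by omega)
      have hspec2 : t + (r-1) * Nat.find hex' ≤ (F ∩ Finset.Icc 1 (t + r * Nat.find hex')).card :=
        Nat.find_spec hex'
      generalize Nat.find hex' = n at *
      omega
    · rintro ⟨j, hjk, hFmem, hcj, hmin⟩
      exact ⟨hFmem, j, hcj⟩
  rw [hU, Finset.card_biUnion]
  intro x hx y hy hxy
  show Disjoint (Sset r t m k x) (Sset r t m k y)
  rw [Finset.disjoint_left]
  intro F hFx hFy
  simp only [Sset, Finset.mem_filter] at hFx hFy
  rcases Nat.lt_or_ge x y with h|h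
  · exact hFy.2.2 x h hFx.2.1
  · exact hFx.2.2 y (by omega) hFy.2.1

lemma term_le (r t k j : ℕ) (hr : 3 ≤ r) (ht : 2 ≤ t) :
    (Sset r t (2*k) k j).card * Nat.choose (2*k+2) (k+1) ≤
    (Sset r t (2*k+2) (k+1) j).card * Nat.choose (2*k) k := by
  by_cases hA : t + (r-1)*j ≤ k
  · have hrj : (r-1)*j + j = r*j := by
      rw [Nat.sub_mul, one_mul]
      have : j ≤ r * j := Nat.le_mul_of_pos_left j (by omega)
      omega
    have h2j : 2*j ≤ (r-1)*j := Nat.mul_le_mul_right j (by omega)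
    have hm1 : t + r*j ≤ 2*k := by omega
    have hm2 : t + r*j ≤ 2*k + 2 := by omega
    have hA2 : t + (r-1)*j ≤ k+1 := by omega
    rw [card_Sset r t (2*k) k j hr hA hm1, card_Sset r t (2*k+2) (k+1) j hr hA2 hm2]
    rw [mul_assoc, mul_assoc]
    refine Nat.mul_le_mul_left _ ?_
    have hb := binom_step (t+(r-1)*j) j k (by omega) hA
    have e1 : t + r*j = (t + (r-1)*j) + j := by omega
    rw [e1]
    exact hb
  · have hempty : Sset r t (2*k) k j = ∅ := by
      rw [Finset.eq_empty_iff_forall_notMem]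
      intro F hF
      simp only [Sset, Finset.mem_filter, Finset.mem_powersetCard] at hF
      obtain ⟨⟨_, hFcard⟩, hcj, _⟩ := hF
      unfold hcond at hcj
      have hle : (F ∩ Finset.Icc 1 (t + r*j)).card ≤ F.card :=
        Finset.card_le_card Finset.inter_subset_left
      omega
    rw [hempty]
    simp

lemma main_nat (r t k : ℕ) (hr : 3 ≤ r) (ht : 2 ≤ t) :
    (hitFamily (2*k) k r t).card * Nat.choose (2*k+2) (k+1) ≤
    (hitFamily (2*k+2) (k+1) r t).card * Nat.choose (2*k) k := by
  rw [card_hitFamily r t (2*k) k hr, card_hitFamily r t (2*k+2) (k+1) hr]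
  rw [Finset.sum_mul, Finset.sum_mul]
  calc ∑ j ∈ Finset.range (k+1), (Sset r t (2*k) k j).card * Nat.choose (2*k+2) (k+1)
      ≤ ∑ j ∈ Finset.range (k+1), (Sset r t (2*k+2) (k+1) j).card * Nat.choose (2*k) k :=
        Finset.sum_le_sum (fun j _ => term_le r t k j hr ht)
    _ ≤ ∑ j ∈ Finset.range (k+1+1), (Sset r t (2*k+2) (k+1) j).card * Nat.choose (2*k) k := by
        refine Finset.sum_le_sum_of_subset ?_
        exact Finset.range_subset_range.mpr (by omega)

theorem hitFamily_ratio_mono_half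
    (r t : ℕ) (hr : 3 ≤ r) (ht : 2 ≤ t) :
    ∀ k : ℕ, 1 ≤ k →
      ((hitFamily (2 * k) k r t).card : ℝ) / (Nat.choose (2 * k) k) ≤
        ((hitFamily (2 * k + 2) (k + 1) r t).card : ℝ) / (Nat.choose (2 * k + 2) (k + 1)) := by
  intro k hk
  have hD : (0:ℝ) < (Nat.choose (2*k) k : ℝ) := by
    exact_mod_cast Nat.choose_pos (by omega)
  have hD' : (0:ℝ) < (Nat.choose (2*k+2) (k+1) : ℝ) := by
    exact_mod_cast Nat.choose_pos (by omega)
  rw [div_le_div_iff₀ hD hD']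
  exact_mod_cast main_nat r t k hr ht
end
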